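/- The vector |χ₁(x)⟩ = Σ_{m≥0} x^m / (√((p;p)_m (-p;p)_m)) |m⟩ (equivalently |χ₁(x)⟩ = (x a⁺; p)_∞^{-1}|0⟩) satisfies (a⁺ - x⁻¹(1 - p^{-1/2} k)) |χ₁(x)⟩ = 0. -/

import Mathlib

noncomputable def aPlus (p : ℝ) (v : ℕ → ℂ) : ℕ → ℂ := fun m =>
  match m with
  | 0 => 0
  | Nat.succ m => ((Real.sqrt (1 - p ^ (2 * m + 2)) : ℝ) : ℂ) * v m

noncomputable def kOp (p : ℝ) (v : ℕ → ℂ) : ℕ → ℂ := fun m =>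
  ((p : ℂ) ^ m * ((Real.sqrt p : ℝ) : ℂ)) * v m

/-- q-Pochhammer symbol `(a;q)_m = ∏_{i=1}^m (1 - a q^{i-1})`. -/
noncomputable def qPoch (a q : ℝ) (m : ℕ) : ℝ := ∏ i ∈ Finset.range m, (1 - a * q ^ i)

/-- The vector `|χ₁(x)⟩ = (x a⁺; p)_∞^{-1}|0⟩ = Σ_j x^j (a⁺)^j/(p;p)_j |0⟩`;
its coefficient on `|m⟩` is `x^m √((p²;p²)_m)/(p;p)_m`. -/
noncomputable def chi1 (p x : ℝ) : ℕ → ℂ := fun m =>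
  (x : ℂ) ^ m * ((Real.sqrt (qPoch (p ^ 2) (p ^ 2) m) : ℝ) : ℂ) / ((qPoch p p m : ℝ) : ℂ)

lemma qPoch_succ (a q : ℝ) (m : ℕ) :
    qPoch a q (m + 1) = qPoch a q m * (1 - a * q ^ m) := by
  simp [qPoch, Finset.prod_range_succ]

lemma qPoch_pos {p : ℝ} (hp : 0 < p) (hp1 : p < 1) (m : ℕ) : 0 < qPoch p p m := by
  apply Finset.prod_pos
  intro i _
  have h1 : p * p ^ i ≤ p * 1 := by
    apply mul_le_mul_of_nonneg_left _ hp.le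
    exact pow_le_one₀ hp.le hp1.le
  nlinarith

/-- `(a⁺ - x⁻¹(1 - p^{-1/2} k)) |χ₁(x)⟩ = 0`. -/
theorem chi1_aPlus_eq (p x : ℝ) (hp : 0 < p) (hp1 : p < 1) (hx : x ≠ 0) :
    aPlus p (chi1 p x) - ((x : ℂ))⁻¹ •
      (chi1 p x - (((Real.sqrt p : ℝ) : ℂ))⁻¹ • kOp p (chi1 p x)) = 0 := by
  have hp2 : 0 < p ^ 2 := by positivity
  have hp21 : p ^ 2 < 1 := by nlinarith
  have hsp : (Real.sqrt p : ℂ) ≠ 0 := by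
    simp [Complex.ofReal_ne_zero, Real.sqrt_ne_zero', hp]
  funext m
  cases m with
  | zero =>
    simp only [aPlus, kOp, chi1, Pi.sub_apply, Pi.smul_apply, Pi.zero_apply, smul_eq_mul,
      pow_zero, qPoch, Finset.range_zero, Finset.prod_empty, Real.sqrt_one]
    field_simp
    simp
  | succ m =>
    have hqp := qPoch_pos hp hp1 m
    have hqp2 := qPoch_pos hp2 hp21 m
    have hf : (0:ℝ) < 1 - p ^ 2 * (p ^ 2) ^ m := by
      have : p ^ 2 * (p ^ 2) ^ m ≤ p ^ 2 * 1 :=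
        mul_le_mul_of_nonneg_left (pow_le_one₀ hp2.le hp21.le) hp2.le
      nlinarith
    have hsq : Real.sqrt (qPoch (p ^ 2) (p ^ 2) (m + 1)) =
        Real.sqrt (qPoch (p ^ 2) (p ^ 2) m) * Real.sqrt (1 - p ^ 2 * (p ^ 2) ^ m) := by
      rw [qPoch_succ, Real.sqrt_mul hqp2.le]
    have hexp : p ^ (2 * m + 2) = p ^ 2 * (p ^ 2) ^ m := by
      rw [← pow_mul]; ring
    have hq1 : ((qPoch p p m : ℝ) : ℂ) ≠ 0 := by
      exact_mod_cast hqp.ne'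
    have hq2 : ((1 - p * p ^ m : ℝ) : ℂ) ≠ 0 := by
      have h1 : p * p ^ m ≤ p * 1 :=
        mul_le_mul_of_nonneg_left (pow_le_one₀ hp.le hp1.le) hp.le
      have : (0:ℝ) < 1 - p * p ^ m := by nlinarith
      exact_mod_cast this.ne'
    have hxC : (x : ℂ) ≠ 0 := by exact_mod_cast hx
    have hrec : chi1 p x (m + 1) =
        (x : ℂ) * ((Real.sqrt (1 - p ^ 2 * (p ^ 2) ^ m) : ℝ) : ℂ) /
          ((1 - p * p ^ m : ℝ) : ℂ) * chi1 p x m := by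
      simp only [chi1, qPoch_succ p p m, hsq]
      push_cast
      rw [pow_succ]
      field_simp
    simp only [aPlus, kOp, Pi.sub_apply, Pi.smul_apply, smul_eq_mul, Pi.zero_apply,
      hrec, hexp]
    push_cast
    push_cast at hq2
    field_simp
    ring
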